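/- Let X be an AM-space, Y a Banach lattice, and T: X → Y a finite-rank lattice homomorphism. Then T attains its norm: there exists x₀ in the closed unit ball of X with ‖Tx₀‖ = ‖T‖. -/

import Mathlib

open Filter Topology

set_option linter.unusedSectionVars false

section aux
variable {E : Type*} [NormedAddCommGroup E] [Lattice E] [HasSolidNorm E] [IsOrderedAddMonoid E] [NormedSpace ℝ E]

private lemma aux_inf_add_le {a b c : E} (ha : 0 ≤ a) (hb : 0 ≤ b) (hc : 0 ≤ c) :
    a ⊓ (b + c) ≤ (a ⊓ b) + (a ⊓ c) := by
  have h1 : (a ⊓ b) + (a ⊓ c) = ((a + a) ⊓ (b + a)) ⊓ ((a + c) ⊓ (b + c)) := by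
    rw [add_inf a c (a ⊓ b), inf_add a b a, inf_add a b c]
  rw [h1]
  refine le_inf (le_inf ?_ ?_) (le_inf ?_ ?_)
  · exact inf_le_left.trans (le_add_of_nonneg_right ha)
  · exact inf_le_left.trans (le_add_of_nonneg_left hb)
  · exact inf_le_left.trans (le_add_of_nonneg_right hc)
  · exact inf_le_right

private lemma aux_nonneg_of_add_self {y : E} (h : 0 ≤ y + y) : 0 ≤ y := by
  have hd : y⁻ ⊓ y⁺ = 0 := by rw [inf_comm]; exact posPart_inf_negPart_eq_zero y
  have h2 : y⁻ ⊓ (y⁺ + y⁺) ≤ 0 := by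
    calc y⁻ ⊓ (y⁺ + y⁺) ≤ (y⁻ ⊓ y⁺) + (y⁻ ⊓ y⁺) :=
          aux_inf_add_le (negPart_nonneg y) (posPart_nonneg y) (posPart_nonneg y)
      _ = 0 := by rw [hd, add_zero]
  have h3 : y + y = (y⁺ + y⁺) - (y⁻ + y⁻) := by
    conv_lhs => rw [← posPart_sub_negPart y]
    abel
  rw [h3] at h
  have hww : y⁻ + y⁻ ≤ y⁺ + y⁺ := sub_nonneg.mp h
  have h4 : y⁻ ≤ y⁺ + y⁺ := (le_add_of_nonneg_left (negPart_nonneg y)).trans hww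
  have h5 : y⁻ ≤ 0 := by
    have := inf_eq_left.mpr h4
    rw [← this]; exact h2
  exact negPart_eq_zero.mp (le_antisymm h5 (negPart_nonneg y))

private lemma aux_smul_nonneg {x : E} (hx : 0 ≤ x) : ∀ {c : ℝ}, 0 ≤ c → 0 ≤ c • x := by
  have hhalf : ∀ v : E, 0 ≤ v → 0 ≤ (2⁻¹ : ℝ) • v := by
    intro v hv
    apply aux_nonneg_of_add_self
    have : (2⁻¹ : ℝ) • v + (2⁻¹ : ℝ) • v = v := by
      rw [← add_smul]; norm_num
    rw [this]; exact hv
  have hpow : ∀ m : ℕ, 0 ≤ ((2⁻¹ : ℝ) ^ m) • x := by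
    intro m
    induction m with
    | zero => simpa using hx
    | succ m ih =>
      have : ((2⁻¹ : ℝ) ^ (m + 1)) • x = (2⁻¹ : ℝ) • (((2⁻¹ : ℝ) ^ m) • x) := by
        rw [smul_smul, ← pow_succ']
      rw [this]; exact hhalf _ ih
  have hdyadic : ∀ (n m : ℕ), 0 ≤ ((n : ℝ) / 2 ^ m) • x := by
    intro n m
    have : ((n : ℝ) / 2 ^ m) • x = (n : ℝ) • (((2⁻¹ : ℝ) ^ m) • x) := by
      rw [smul_smul]; congr 1; rw [inv_pow]; ring
    rw [this, Nat.cast_smul_eq_nsmul]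
    exact nsmul_nonneg (hpow m) n
  intro c hc
  set f : ℕ → ℝ := fun k => (⌊c * 2 ^ k⌋₊ : ℝ) / 2 ^ k with hf
  have hfle : ∀ k, f k ≤ c := by
    intro k
    rw [hf, div_le_iff₀ (by positivity)]
    exact Nat.floor_le (by positivity)
  have hfge : ∀ k, c - (2⁻¹ : ℝ) ^ k ≤ f k := by
    intro k
    rw [hf, le_div_iff₀ (by positivity), sub_mul]
    have h2 : (2⁻¹ : ℝ) ^ k * 2 ^ k = 1 := by
      rw [inv_pow]; field_simp
    rw [h2]
    have := Nat.lt_floor_add_one (c * 2 ^ k)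
    linarith
  have htend : Tendsto f atTop (𝓝 c) := by
    have hlow : Tendsto (fun k : ℕ => c - (2⁻¹ : ℝ) ^ k) atTop (𝓝 c) := by
      have : Tendsto (fun k : ℕ => (2⁻¹ : ℝ) ^ k) atTop (𝓝 0) :=
        tendsto_pow_atTop_nhds_zero_of_lt_one (by norm_num) (by norm_num)
      simpa using tendsto_const_nhds.sub this
    exact tendsto_of_tendsto_of_tendsto_of_le_of_le hlow tendsto_const_nhds hfge hfle
  exact ge_of_tendsto' (htend.smul_const x) fun k => hdyadic _ _

private lemma aux_smul_le_smul {a b : E} {c : ℝ} (hc : 0 ≤ c) (h : a ≤ b) : c • a ≤ c • b := by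
  have := aux_smul_nonneg (sub_nonneg.mpr h) hc
  rw [smul_sub] at this
  exact sub_nonneg.mp this

private lemma aux_coeff_le {x : E} {a b : ℝ} (hab : a ≤ b) (hx : 0 ≤ x) : a • x ≤ b • x := by
  have := aux_smul_nonneg hx (sub_nonneg.mpr hab)
  rw [sub_smul] at this
  exact sub_nonneg.mp this

private lemma aux_disjoint_smul {a b : E} {c : ℝ} (ha : 0 ≤ a) (hb : 0 ≤ b) (hc : 0 ≤ c)
    (h : a ⊓ b = 0) : (c • a) ⊓ b = 0 := by
  set t : ℝ := max c 1 with ht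
  have ht1 : (1 : ℝ) ≤ t := le_max_right _ _
  have ht0 : 0 < t := lt_of_lt_of_le one_pos ht1
  have h1 : (c • a) ⊓ b ≤ (t • a) ⊓ (t • b) := by
    refine inf_le_inf (aux_coeff_le (le_max_left _ _) ha) ?_
    have := aux_coeff_le ht1 hb
    rwa [one_smul] at this
  have h2 : (t • a) ⊓ (t • b) ≤ 0 := by
    have hkey : t⁻¹ • ((t • a) ⊓ (t • b)) ≤ a ⊓ b := by
      refine le_inf ?_ ?_
      · have := aux_smul_le_smul (le_of_lt (inv_pos.mpr ht0)) (inf_le_left (a := t • a) (b := t • b))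
        rwa [smul_smul, inv_mul_cancel₀ (ne_of_gt ht0), one_smul] at this
      · have := aux_smul_le_smul (le_of_lt (inv_pos.mpr ht0)) (inf_le_right (a := t • a) (b := t • b))
        rwa [smul_smul, inv_mul_cancel₀ (ne_of_gt ht0), one_smul] at this
    rw [h] at hkey
    have := aux_smul_le_smul (le_of_lt ht0) hkey
    rwa [smul_smul, mul_inv_cancel₀ (ne_of_gt ht0), one_smul, smul_zero] at this
  refine le_antisymm (h1.trans h2) (le_inf (aux_smul_nonneg ha hc) hb)

end aux

/-- every finite-rank lattice homomorphism from an AM-space into a Banach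
lattice attains its norm. -/
theorem finiteRank_latticeHom_from_AM_space_attains_norm
    {X Y : Type*} [NormedAddCommGroup X] [Lattice X] [HasSolidNorm X] [IsOrderedAddMonoid X] [NormedSpace ℝ X] [CompleteSpace X]
    [NormedAddCommGroup Y] [Lattice Y] [HasSolidNorm Y] [IsOrderedAddMonoid Y] [NormedSpace ℝ Y] [CompleteSpace Y]
    (hAM : ∀ x y : X, 0 ≤ x → 0 ≤ y → ‖x ⊔ y‖ = max ‖x‖ ‖y‖)
    (T : X →L[ℝ] Y)
    (hhom : ∀ x y : X, T (x ⊔ y) = T x ⊔ T y)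
    (hrank : FiniteDimensional ℝ (LinearMap.range (T : X →ₗ[ℝ] Y))) :
    ∃ x₀ : X, ‖x₀‖ ≤ 1 ∧ ‖T x₀‖ = ‖T‖ := by
  classical
  set M := ‖T‖ with hM
  have hM0 : 0 ≤ M := norm_nonneg T
  -- basic facts about T
  have hTmono : ∀ {a b : X}, a ≤ b → T a ≤ T b := by
    intro a b h
    have h1 : T b = T a ⊔ T b := by rw [← hhom, sup_eq_right.mpr h]
    rw [h1]; exact le_sup_left
  have hTpos : ∀ {a : X}, 0 ≤ a → 0 ≤ T a := by
    intro a h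
    have := hTmono h
    rwa [map_zero] at this
  have hTinf : ∀ a b : X, T (a ⊓ b) = T a ⊓ T b := by
    intro a b
    have h1 : a ⊓ b = a + b - (a ⊔ b) := eq_sub_of_add_eq (inf_add_sup a b)
    have h2 : T a ⊓ T b = T a + T b - (T a ⊔ T b) := eq_sub_of_add_eq (inf_add_sup _ _)
    rw [h1, map_sub, map_add, hhom, h2]
  have hTabs : ∀ a : X, T |a| = |T a| := by
    intro a
    have h1 : |a| = a ⊔ -a := rfl
    have h2 : |T a| = T a ⊔ -(T a) := rfl
    rw [h1, hhom, map_neg, h2]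
  -- the norming sequence
  have hxex : ∀ n : ℕ, ∃ x : X, 0 ≤ x ∧ ‖x‖ ≤ 1 ∧ M - 1 / (n + 1) ≤ ‖T x‖ := by
    intro n
    have hr : M - 1 / (n + 1) < M := by
      have : (0 : ℝ) < 1 / (n + 1) := by positivity
      linarith
    obtain ⟨x, hx1, hx2⟩ := T.exists_lt_apply_of_lt_opNorm hr
    refine ⟨|x|, abs_nonneg x, by rw [norm_abs_eq_norm]; exact hx1.le, ?_⟩
    rw [hTabs, norm_abs_eq_norm]
    exact hx2.le
  choose x hx0 hx1 hx2 using hxex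
  -- partial suprema
  let y : ℕ → X := fun n => Nat.rec (x 0) (fun n yn => yn ⊔ x (n + 1)) n
  have hysucc : ∀ n, y (n + 1) = y n ⊔ x (n + 1) := fun n => rfl
  have hy0 : ∀ n, 0 ≤ y n := by
    intro n
    induction n with
    | zero => exact hx0 0
    | succ n ih => rw [hysucc]; exact ih.trans le_sup_left
  have hy1 : ∀ n, ‖y n‖ ≤ 1 := by
    intro n
    induction n with
    | zero => exact hx1 0
    | succ n ih =>
      rw [hysucc, hAM _ _ (hy0 n) (hx0 (n + 1))]
      exact max_le ih (hx1 (n + 1))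
  have hymono : Monotone y := monotone_nat_of_le_succ fun n => by
    rw [hysucc]; exact le_sup_left
  have hyx : ∀ n, x n ≤ y n := by
    intro n
    cases n with
    | zero => exact le_rfl
    | succ n => rw [hysucc]; exact le_sup_right
  have hTy_le : ∀ n, ‖T (y n)‖ ≤ M := by
    intro n
    calc ‖T (y n)‖ ≤ ‖T‖ * ‖y n‖ := T.le_opNorm _
      _ ≤ M * 1 := mul_le_mul_of_nonneg_left (hy1 n) hM0
      _ = M := mul_one M
  have hTy_ge : ∀ n, M - 1 / (n + 1) ≤ ‖T (y n)‖ := by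
    intro n
    refine (hx2 n).trans ?_
    apply norm_le_norm_of_abs_le_abs
    rw [abs_of_nonneg (hTpos (hx0 n)), abs_of_nonneg (hTpos (hy0 n))]
    exact hTmono (hyx n)
  -- the finite dimensional range
  set F := LinearMap.range (T : X →ₗ[ℝ] Y) with hF
  haveI : FiniteDimensional ℝ F := hrank
  have hmemT : ∀ a : X, T a ∈ F := fun a => ⟨a, rfl⟩
  have hFsup : ∀ a b : Y, a ∈ F → b ∈ F → a ⊔ b ∈ F := by
    rintro a b ⟨p, rfl⟩ ⟨q, rfl⟩
    refine ⟨p ⊔ q, ?_⟩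
    show T (p ⊔ q) = T p ⊔ T q
    exact hhom p q
  -- subsequence extraction tool
  have hsub : ∀ (g : ℕ → Y) (r : ℝ), (∀ n, g n ∈ F) → (∀ n, ‖g n‖ ≤ r) →
      ∃ z, z ∈ F ∧ ∃ φ : ℕ → ℕ, StrictMono φ ∧ Tendsto (fun k => g (φ k)) atTop (𝓝 z) := by
    intro g r hg hr
    let g' : ℕ → F := fun n => ⟨g n, hg n⟩
    have hball : ∀ n, g' n ∈ Metric.closedBall (0 : F) r := by
      intro n
      rw [Metric.mem_closedBall, dist_zero_right]
      exact hr n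
    obtain ⟨z', _, φ, hφ, hlim⟩ := (isCompact_closedBall (0 : F) r).tendsto_subseq hball
    exact ⟨(z' : Y), z'.2, φ, hφ, (continuous_subtype_val.tendsto z').comp hlim⟩
  obtain ⟨z, hzF, φ, hφmono, hφlim⟩ := hsub (fun n => T (y n)) M (fun n => hmemT _) hTy_le
  have hz_ub : ∀ m, T (y m) ≤ z := by
    intro m
    refine ge_of_tendsto hφlim ?_
    filter_upwards [eventually_ge_atTop m] with k hk
    exact hTmono (hymono (hk.trans hφmono.le_apply))
  have hz0 : 0 ≤ z := (hTpos (hy0 0)).trans (hz_ub 0)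
  have hznorm : ‖z‖ = M := by
    have h1 : Tendsto (fun k => ‖T (y (φ k))‖) atTop (𝓝 ‖z‖) := hφlim.norm
    refine tendsto_nhds_unique h1 ?_
    have hlow : Tendsto (fun k : ℕ => M - 1 / (k + 1)) atTop (𝓝 M) := by
      have h2 := tendsto_one_div_add_atTop_nhds_zero_nat (𝕜 := ℝ)
      simpa using tendsto_const_nhds.sub h2
    refine tendsto_of_tendsto_of_tendsto_of_le_of_le hlow tendsto_const_nhds ?_ ?_
    · intro k
      refine le_trans ?_ (hTy_ge (φ k))
      have hk : (k : ℝ) + 1 ≤ (φ k : ℝ) + 1 := by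
        have h3 : k ≤ φ k := hφmono.le_apply
        have : (k : ℝ) ≤ (φ k : ℝ) := by exact_mod_cast h3
        linarith
      have h4 : 1 / ((φ k : ℝ) + 1) ≤ 1 / ((k : ℝ) + 1) :=
        one_div_le_one_div_of_le (by positivity) hk
      simp only []
      linarith
    · exact fun k => hTy_le (φ k)
  -- the key finite-dimensional order estimate
  have hL2 : ∃ C : ℝ, 0 < C ∧ ∀ v : Y, v ∈ F → 0 ≤ v → v ≤ z → v ≤ (C * ‖v‖) • z := by
    by_contra hcon
    push_neg at hcon
    have hv : ∀ k : ℕ, ∃ v : Y, v ∈ F ∧ 0 ≤ v ∧ v ≤ z ∧ ¬ v ≤ (((k : ℝ) + 1) * ‖v‖) • z := by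
      intro k
      obtain ⟨v, h1, h2, h3, h4⟩ := hcon ((k : ℝ) + 1) (by positivity)
      exact ⟨v, h1, h2, h3, h4⟩
    choose v hvF hv0 hvz hvk using hv
    have hvne : ∀ k, v k ≠ 0 := by
      intro k h
      apply hvk k
      rw [h]
      simp
    have hvnorm : ∀ k, 0 < ‖v k‖ := fun k => norm_pos_iff.mpr (hvne k)
    set s : ℕ → ℝ := fun k => (((k : ℝ) + 1) * ‖v k‖)⁻¹ with hs
    have hs0 : ∀ k, 0 < s k := by
      intro k
      have := hvnorm k
      rw [hs]
      positivity
    set u : ℕ → Y := fun k => s k • v k with hu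
    have hu0 : ∀ k, 0 ≤ u k := fun k => aux_smul_nonneg (hv0 k) (hs0 k).le
    have huF : ∀ k, u k ∈ F := fun k => Submodule.smul_mem F _ (hvF k)
    have hunorm : ∀ k, ‖u k‖ = 1 / ((k : ℝ) + 1) := by
      intro k
      rw [hu]
      simp only [norm_smul, Real.norm_eq_abs]
      rw [abs_of_pos (hs0 k), hs]
      have hne : ((k : ℝ) + 1) * ‖v k‖ ≠ 0 := by
        have := hvnorm k; positivity
      field_simp
      simp [(hvnorm k).ne']
    have hulim : Tendsto u atTop (𝓝 0) := by
      apply tendsto_zero_iff_norm_tendsto_zero.mpr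
      have h2 := tendsto_one_div_add_atTop_nhds_zero_nat (𝕜 := ℝ)
      refine h2.congr fun k => (hunorm k).symm
    have huz : ∀ k, ¬ u k ≤ z := by
      intro k h
      apply hvk k
      have h2 := aux_smul_le_smul (c := (s k)⁻¹) (le_of_lt (inv_pos.mpr (hs0 k))) h
      rw [hu] at h2
      simp only [smul_smul] at h2
      rw [inv_mul_cancel₀ (ne_of_gt (hs0 k)), one_smul] at h2
      rwa [hs, inv_inv] at h2
    have hulez : ∀ k, u k ≤ s k • z := fun k => aux_smul_le_smul (hs0 k).le (hvz k)
    set w : ℕ → Y := fun k => u k ⊔ z - z with hw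
    have hw0 : ∀ k, 0 ≤ w k := fun k => sub_nonneg.mpr le_sup_right
    have hwne : ∀ k, w k ≠ 0 := by
      intro k h
      rw [hw] at h
      simp only [sub_eq_zero] at h
      exact huz k (sup_eq_right.mp h)
    have hwnorm : ∀ k, 0 < ‖w k‖ := fun k => norm_pos_iff.mpr (hwne k)
    have hwF : ∀ k, w k ∈ F := fun k => Submodule.sub_mem F (hFsup _ _ (huF k) hzF) hzF
    have hwlim : Tendsto w atTop (𝓝 0) := by
      have h1 : Tendsto (fun k => u k ⊔ z) atTop (𝓝 (0 ⊔ z)) :=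
        hulim.sup_nhds tendsto_const_nhds
      rw [sup_comm, sup_eq_left.mpr hz0] at h1
      have h2 := h1.sub_const z
      simpa using h2
    have hwu : ∀ k, w k ≤ u k := by
      intro k
      rw [hw, sub_le_iff_le_add]
      exact sup_le (le_add_of_nonneg_right hz0) (le_add_of_nonneg_left (hu0 k))
    set q : ℕ → Y := fun k => z ⊔ u k - u k with hq
    have hq0 : ∀ k, 0 ≤ q k := fun k => sub_nonneg.mpr le_sup_right
    have hdisj : ∀ k, w k ⊓ q k = 0 := by
      intro k
      rw [hw, hq]
      simp only []
      rw [sup_comm z (u k), ← sub_sup z (u k) (u k ⊔ z)]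
      rw [sup_comm z (u k), sub_self]
    have hqlim : Tendsto q atTop (𝓝 z) := by
      have h1 : Tendsto (fun k => z ⊔ u k) atTop (𝓝 (z ⊔ 0)) :=
        tendsto_const_nhds.sup_nhds hulim
      rw [sup_eq_left.mpr hz0] at h1
      have h2 := h1.sub hulim
      simpa using h2
    set g : ℕ → Y := fun k => ‖w k‖⁻¹ • w k with hg
    have hg0 : ∀ k, 0 ≤ g k := fun k =>
      aux_smul_nonneg (hw0 k) (inv_nonneg.mpr (norm_nonneg _))
    have hgF : ∀ k, g k ∈ F := fun k => Submodule.smul_mem F _ (hwF k)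
    have hgnorm : ∀ k, ‖g k‖ = 1 := by
      intro k
      rw [hg]
      simp only [norm_smul, Real.norm_eq_abs]
      rw [abs_of_pos (inv_pos.mpr (hwnorm k))]
      exact inv_mul_cancel₀ (ne_of_gt (hwnorm k))
    obtain ⟨p, hpF, ψ, hψ, hplim⟩ := hsub g 1 hgF (fun k => (hgnorm k).le)
    have hpnorm : ‖p‖ = 1 := by
      have h1 : Tendsto (fun k => ‖g (ψ k)‖) atTop (𝓝 ‖p‖) := hplim.norm
      have h2 : Tendsto (fun k : ℕ => ‖g (ψ k)‖) atTop (𝓝 1) := by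
        refine tendsto_const_nhds.congr fun k => (hgnorm (ψ k)).symm
      exact tendsto_nhds_unique h1 h2
    have hp0 : 0 ≤ p := ge_of_tendsto' hplim fun k => hg0 (ψ k)
    have hgq : ∀ k, g k ⊓ q k = 0 := fun k =>
      aux_disjoint_smul (hw0 k) (hq0 k) (inv_nonneg.mpr (norm_nonneg _)) (hdisj k)
    have hpz : p ⊓ z = 0 := by
      have h1 : Tendsto (fun k => g (ψ k) ⊓ q (ψ k)) atTop (𝓝 (p ⊓ z)) :=
        hplim.inf_nhds (hqlim.comp hψ.tendsto_atTop)
      have h2 : Tendsto (fun k => g (ψ k) ⊓ q (ψ k)) atTop (𝓝 0) :=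
        tendsto_const_nhds.congr fun k => (hgq (ψ k)).symm
      exact tendsto_nhds_unique h1 h2
    have hgp : ∀ k, g k ⊓ p = 0 := by
      intro k
      have h1 : g k ≤ (‖w k‖⁻¹ * s k) • z := by
        calc g k = ‖w k‖⁻¹ • w k := rfl
          _ ≤ ‖w k‖⁻¹ • u k :=
              aux_smul_le_smul (inv_nonneg.mpr (norm_nonneg _)) (hwu k)
          _ ≤ ‖w k‖⁻¹ • (s k • z) :=
              aux_smul_le_smul (inv_nonneg.mpr (norm_nonneg _)) (hulez k)
          _ = (‖w k‖⁻¹ * s k) • z := by rw [smul_smul]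
      have h2 : ((‖w k‖⁻¹ * s k) • z) ⊓ p = 0 := by
        refine aux_disjoint_smul hz0 hp0 ?_ ?_
        · have := (hs0 k).le
          positivity
        · rw [inf_comm]; exact hpz
      refine le_antisymm ?_ (le_inf (hg0 k) hp0)
      calc g k ⊓ p ≤ ((‖w k‖⁻¹ * s k) • z) ⊓ p := inf_le_inf_right p h1
        _ = 0 := h2
    have hp_eq : p = 0 := by
      have h1 : Tendsto (fun k => g (ψ k) ⊓ p) atTop (𝓝 (p ⊓ p)) :=
        hplim.inf_nhds tendsto_const_nhds
      rw [inf_idem] at h1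
      have h2 : Tendsto (fun k => g (ψ k) ⊓ p) atTop (𝓝 0) :=
        tendsto_const_nhds.congr fun k => (hgp (ψ k)).symm
      exact tendsto_nhds_unique h1 h2
    rw [hp_eq, norm_zero] at hpnorm
    norm_num at hpnorm
  obtain ⟨C, hC0, hC⟩ := hL2
  -- choosing good approximants
  have hNex : ∀ ε : ℝ, 0 < ε → ∃ N, T (y N) ≤ z ∧ z - T (y N) ≤ ε • z := by
    intro ε hε
    have hlim0 : Tendsto (fun k => ‖z - T (y (φ k))‖) atTop (𝓝 0) := by
      have h1 := tendsto_const_nhds (x := z) (f := (atTop : Filter ℕ))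
      have h2 := h1.sub hφlim
      rw [sub_self] at h2
      simpa using h2.norm
    have hev : ∀ᶠ k in atTop, ‖z - T (y (φ k))‖ < ε / C :=
      hlim0.eventually (gt_mem_nhds (by positivity))
    obtain ⟨k, hk⟩ := hev.exists
    refine ⟨φ k, hz_ub _, ?_⟩
    set vv := z - T (y (φ k)) with hvv
    have hvvF : vv ∈ F := Submodule.sub_mem F hzF (hmemT _)
    have hvv0 : 0 ≤ vv := sub_nonneg.mpr (hz_ub _)
    have hvvz : vv ≤ z := sub_le_self z (hTpos (hy0 _))
    refine (hC vv hvvF hvv0 hvvz).trans (aux_coeff_le ?_ hz0)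
    have h3 : C * ‖vv‖ ≤ C * (ε / C) := mul_le_mul_of_nonneg_left hk.le hC0.le
    have h4 : C * (ε / C) = ε := by field_simp
    linarith
  -- improvement step
  have hstep : ∀ (a : X) (ε : ℝ), 0 < ε → ε ≤ 1 → 0 ≤ a → ‖a‖ ≤ 1 → T a ≤ z →
      z - T a ≤ ε • z →
      ∃ b : X, 0 ≤ b ∧ ‖b‖ ≤ 1 ∧ T b ≤ z ∧ z - T b ≤ (ε / 2) • z ∧ ‖b - a‖ ≤ 2 * ε := by
    intro a ε hε hε1 ha0 ha1 haz hagap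
    obtain ⟨N, hN1, hN2⟩ := hNex (ε / 2) (by positivity)
    set s' : X := (2 * ε) • y N with hs'
    set b := a ⊔ (y N ⊓ (a + s')) with hb
    have hs'0 : 0 ≤ s' := aux_smul_nonneg (hy0 N) (by positivity)
    have hab : a ≤ b := le_sup_left
    have hb0 : 0 ≤ b := ha0.trans hab
    have hbub : b ≤ a ⊔ y N := sup_le le_sup_left (le_sup_of_le_right inf_le_left)
    have hbnorm : ‖b‖ ≤ 1 := by
      have h1 : |b| ≤ |a ⊔ y N| := by
        rw [abs_of_nonneg hb0, abs_of_nonneg (ha0.trans le_sup_left)]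
        exact hbub
      refine (norm_le_norm_of_abs_le_abs h1).trans ?_
      rw [hAM a (y N) ha0 (hy0 N)]
      exact max_le ha1 (hy1 N)
    have hbas : b ≤ a + s' := sup_le (le_add_of_nonneg_right hs'0) inf_le_right
    have hdist : ‖b - a‖ ≤ 2 * ε := by
      have h1 : |b - a| ≤ |s'| := by
        rw [abs_of_nonneg (sub_nonneg.mpr hab), abs_of_nonneg hs'0]
        exact sub_le_iff_le_add'.mpr hbas
      refine (norm_le_norm_of_abs_le_abs h1).trans ?_
      rw [hs', norm_smul, Real.norm_eq_abs, abs_of_pos (by positivity : (0:ℝ) < 2 * ε)]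
      calc (2 * ε) * ‖y N‖ ≤ (2 * ε) * 1 :=
            mul_le_mul_of_nonneg_left (hy1 N) (by positivity)
        _ = 2 * ε := mul_one _
    have hTb : T b = T a ⊔ (T (y N) ⊓ (T a + (2 * ε) • T (y N))) := by
      rw [hb, hhom, hTinf, map_add, hs', map_smul]
    have hTbz : T b ≤ z := by
      rw [hTb]
      exact sup_le haz (le_trans inf_le_left hN1)
    have hTyN : z - (ε / 2) • z ≤ T (y N) := sub_le_comm.mp hN2
    have hTa : z - ε • z ≤ T a := sub_le_comm.mp hagap
    have h2 : z ≤ T a + (2 * ε) • T (y N) := by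
      have h3 := add_le_add hTa (aux_smul_le_smul (by positivity : (0:ℝ) ≤ 2 * ε) hTyN)
      refine le_trans ?_ h3
      have h4 : (z - ε • z) + (2 * ε) • (z - (ε / 2) • z) = z + (ε - ε * ε) • z := by
        rw [smul_sub, smul_smul]
        module
      rw [h4]
      exact le_add_of_nonneg_right (aux_smul_nonneg hz0 (by nlinarith))
    have hTb_ge : z - (ε / 2) • z ≤ T b := by
      rw [hTb]
      refine le_trans (le_inf hTyN ?_) le_sup_right
      refine le_trans ?_ h2
      exact sub_le_self z (aux_smul_nonneg hz0 (by positivity))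
    exact ⟨b, hb0, hbnorm, hTbz, sub_le_comm.mp hTb_ge, hdist⟩
  -- iterate
  let Inv : ℕ → X → Prop := fun n a =>
    0 ≤ a ∧ ‖a‖ ≤ 1 ∧ T a ≤ z ∧ z - T a ≤ ((2⁻¹ : ℝ) ^ n) • z
  have h00 : Inv 0 0 := by
    refine ⟨le_rfl, by simp, by rw [map_zero]; exact hz0, ?_⟩
    rw [map_zero, sub_zero, pow_zero, one_smul]
  have hstep' : ∀ n (a : X), Inv n a → ∃ b, Inv (n + 1) b ∧ ‖b - a‖ ≤ 2 * (2⁻¹ : ℝ) ^ n := by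
    rintro n a ⟨h1, h2, h3, h4⟩
    obtain ⟨b, hb1, hb2, hb3, hb4, hb5⟩ :=
      hstep a ((2⁻¹ : ℝ) ^ n) (by positivity)
        (pow_le_one₀ (by norm_num) (by norm_num)) h1 h2 h3 h4
    refine ⟨b, ⟨hb1, hb2, hb3, ?_⟩, hb5⟩
    rw [pow_succ]
    rwa [div_eq_mul_inv] at hb4
  let Q : ∀ n : ℕ, {a : X // Inv n a} := fun n =>
    Nat.rec ⟨0, h00⟩
      (fun n p => ⟨(hstep' n p.1 p.2).choose, ((hstep' n p.1 p.2).choose_spec).1⟩) n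
  let a : ℕ → X := fun n => (Q n).1
  have haInv : ∀ n, Inv n (a n) := fun n => (Q n).2
  have hstepb : ∀ n, ‖a (n + 1) - a n‖ ≤ 2 * (2⁻¹ : ℝ) ^ n := fun n =>
    ((hstep' n (Q n).1 (Q n).2).choose_spec).2
  have hcauchy : CauchySeq a := by
    apply cauchySeq_of_le_geometric (2⁻¹ : ℝ) 2 (by norm_num)
    intro n
    rw [dist_eq_norm, norm_sub_rev]
    exact hstepb n
  obtain ⟨x₀, hx₀⟩ := cauchySeq_tendsto_of_complete hcauchy
  have hx₀norm : ‖x₀‖ ≤ 1 :=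
    le_of_tendsto hx₀.norm (Eventually.of_forall fun n => (haInv n).2.1)
  have hTx₀ : T x₀ = z := by
    have h1 : Tendsto (fun n => T (a n)) atTop (𝓝 (T x₀)) :=
      (T.continuous.tendsto x₀).comp hx₀
    have h2 : Tendsto (fun n => T (a n)) atTop (𝓝 z) := by
      rw [← tendsto_sub_nhds_zero_iff]
      apply squeeze_zero_norm (a := fun n => (2⁻¹ : ℝ) ^ n * ‖z‖)
      · intro n
        have h3 : |T (a n) - z| ≤ |((2⁻¹ : ℝ) ^ n) • z| := by
          rw [abs_of_nonpos (sub_nonpos.mpr (haInv n).2.2.1)]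
          rw [abs_of_nonneg (aux_smul_nonneg hz0 (by positivity))]
          rw [neg_sub]
          exact (haInv n).2.2.2
        have h4 := norm_le_norm_of_abs_le_abs h3
        rwa [norm_smul, Real.norm_eq_abs, abs_of_pos (by positivity : (0:ℝ) < (2⁻¹:ℝ)^n)] at h4
      · have h5 : Tendsto (fun n : ℕ => (2⁻¹ : ℝ) ^ n) atTop (𝓝 0) :=
          tendsto_pow_atTop_nhds_zero_of_lt_one (by norm_num) (by norm_num)
        simpa using h5.mul_const ‖z‖
    exact tendsto_nhds_unique h1 h2
  exact ⟨x₀, hx₀norm, by rw [hTx₀, hznorm]⟩
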